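/- Let n ≥ 1 and q ≥ 2 be integers. Let B_0, …, B_n be nonnegative reals with B_0 = 1; set |C| := Σ_{j=0}^{n} B_j and define B_i^⊥ := (1/|C|) Σ_{j=0}^{n} B_j K_i(q;j) for 0 ≤ i ≤ n. Assume B_i^⊥ ≥ 0 and B_i^⊥ ≥ B_i for all 1 ≤ i ≤ n. Let h : {0,…,n} → ℝ be any function and let Z(x) = Σ_{i=0}^{n} z_i K_i(q;x) satisfy, for all 1 ≤ i ≤ n: (i) Z(i) ≤ h(i) and (ii) Z(i) − |C|·z_i ≥ 0. Then Σ_{i=0}^{n} (B_i^⊥ − B_i)·h(i) ≥ Z(0) − |C|·z_0. -/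
import Mathlib


/-- The `q`-ary Krawtchouk polynomial `K_t(q;x)` (with parameter `n`), evaluated at a
natural number `x`. -/
def kraw (n q t x : ℕ) : ℤ :=
  ∑ l ∈ Finset.range (t + 1),
    (-1 : ℤ) ^ l * (x.choose l) * ((n - x).choose (t - l)) * ((q : ℤ) - 1) ^ (t - l)

/-- Variant of the key polynomial bound: if `Z(i) ≤ h(i)` and `Z(i) - |C| z_i ≥ 0`
for `1 ≤ i ≤ n`, then `∑_i (B_i^⊥ - B_i) h(i) ≥ Z(0) - |C| z_0`. -/
theorem key_polynomial_bound_primal (n q : ℕ) (hn : 1 ≤ n) (hq : 2 ≤ q)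
    (B : ℕ → ℝ) (hBnn : ∀ i, i ≤ n → 0 ≤ B i) (hB0 : B 0 = 1)
    (Ccard : ℝ) (hCcard : Ccard = ∑ j ∈ Finset.range (n + 1), B j)
    (Bperp : ℕ → ℝ)
    (hBperp : ∀ i, i ≤ n →
      Bperp i = (1 / Ccard) * ∑ j ∈ Finset.range (n + 1), B j * (kraw n q i j : ℝ))
    (hBperpnn : ∀ i, 1 ≤ i → i ≤ n → 0 ≤ Bperp i)
    (hdom : ∀ i, 1 ≤ i → i ≤ n → B i ≤ Bperp i)
    (h : ℕ → ℝ) (z : ℕ → ℝ) (Z : ℕ → ℝ)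
    (hZ : ∀ x, x ≤ n → Z x = ∑ i ∈ Finset.range (n + 1), z i * (kraw n q i x : ℝ))
    (hi : ∀ i, 1 ≤ i → i ≤ n → Z i ≤ h i)
    (hii : ∀ i, 1 ≤ i → i ≤ n → 0 ≤ Z i - Ccard * z i) :
    ∑ i ∈ Finset.range (n + 1), (Bperp i - B i) * h i ≥ Z 0 - Ccard * z 0 := by
  have hC1 : (1:ℝ) ≤ Ccard := by
    rw [hCcard, ← hB0]
    exact Finset.single_le_sum (fun j hj => hBnn j (by simpa using Nat.lt_succ_iff.mp (Finset.mem_range.mp hj))) (by simp)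
  have hCpos : (0:ℝ) < Ccard := lt_of_lt_of_le one_pos hC1
  have hCne : Ccard ≠ 0 := ne_of_gt hCpos
  have hk0 : ∀ j : ℕ, ((kraw n q 0 j : ℤ) : ℝ) = 1 := by
    intro j; simp [kraw]
  have hBperp0 : Bperp 0 = 1 := by
    rw [hBperp 0 (Nat.zero_le n)]
    simp only [hk0, mul_one]
    rw [← hCcard]
    field_simp
  have hsum : ∀ t, t ≤ n →
      ∑ j ∈ Finset.range (n+1), B j * ((kraw n q t j : ℤ) : ℝ) = Ccard * Bperp t := by
    intro t ht
    rw [hBperp t ht]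
    field_simp
  have hBZ : ∑ i ∈ Finset.range (n+1), B i * Z i
      = Ccard * ∑ t ∈ Finset.range (n+1), z t * Bperp t := by
    calc ∑ i ∈ Finset.range (n+1), B i * Z i
        = ∑ i ∈ Finset.range (n+1), ∑ t ∈ Finset.range (n+1),
            z t * (B i * ((kraw n q t i : ℤ) : ℝ)) := by
          refine Finset.sum_congr rfl (fun i hi' => ?_)
          rw [hZ i (Nat.lt_succ_iff.mp (Finset.mem_range.mp hi')), Finset.mul_sum]
          exact Finset.sum_congr rfl (fun t _ => by ring)
      _ = ∑ t ∈ Finset.range (n+1), z t *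
            (∑ i ∈ Finset.range (n+1), B i * ((kraw n q t i : ℤ) : ℝ)) := by
          rw [Finset.sum_comm]
          exact Finset.sum_congr rfl (fun t _ => (Finset.mul_sum _ _ _).symm)
      _ = ∑ t ∈ Finset.range (n+1), z t * (Ccard * Bperp t) := by
          refine Finset.sum_congr rfl (fun t ht => ?_)
          rw [hsum t (Nat.lt_succ_iff.mp (Finset.mem_range.mp ht))]
      _ = Ccard * ∑ t ∈ Finset.range (n+1), z t * Bperp t := by
          rw [Finset.mul_sum]
          exact Finset.sum_congr rfl (fun t _ => by ring)
  have step1 : ∑ i ∈ Finset.range (n+1), (Bperp i - B i) * Z i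
      ≤ ∑ i ∈ Finset.range (n+1), (Bperp i - B i) * h i := by
    refine Finset.sum_le_sum (fun i hi' => ?_)
    have hin : i ≤ n := Nat.lt_succ_iff.mp (Finset.mem_range.mp hi')
    rcases Nat.eq_zero_or_pos i with rfl | hipos
    · rw [hBperp0, hB0]; simp
    · exact mul_le_mul_of_nonneg_left (hi i hipos hin)
        (sub_nonneg.mpr (hdom i hipos hin))
  have step2 : ∑ i ∈ Finset.range (n+1), (Bperp i - B i) * Z i
      = ∑ i ∈ Finset.range (n+1), Bperp i * (Z i - Ccard * z i) := by
    have e1 : ∑ i ∈ Finset.range (n+1), (Bperp i - B i) * Z i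
        = ∑ i ∈ Finset.range (n+1), Bperp i * Z i
          - ∑ i ∈ Finset.range (n+1), B i * Z i := by
      rw [← Finset.sum_sub_distrib]
      exact Finset.sum_congr rfl (fun i _ => by ring)
    rw [e1, hBZ]
    rw [Finset.mul_sum, ← Finset.sum_sub_distrib]
    exact Finset.sum_congr rfl (fun i _ => by ring)
  have step3 : Z 0 - Ccard * z 0
      ≤ ∑ i ∈ Finset.range (n+1), Bperp i * (Z i - Ccard * z i) := by
    rw [Finset.sum_range_succ' (fun i => Bperp i * (Z i - Ccard * z i)) n]
    have h0 : Bperp 0 * (Z 0 - Ccard * z 0) = Z 0 - Ccard * z 0 := by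
      rw [hBperp0]; ring
    have hrest : 0 ≤ ∑ i ∈ Finset.range n, Bperp (i+1) * (Z (i+1) - Ccard * z (i+1)) := by
      refine Finset.sum_nonneg (fun i hi' => ?_)
      have hin : i + 1 ≤ n := Nat.succ_le_of_lt (Finset.mem_range.mp hi')
      exact mul_nonneg (hBperpnn (i+1) (Nat.succ_le_succ (Nat.zero_le i)) hin)
        (hii (i+1) (Nat.succ_le_succ (Nat.zero_le i)) hin)
    linarith [hrest, h0]
  calc Z 0 - Ccard * z 0
      ≤ ∑ i ∈ Finset.range (n+1), Bperp i * (Z i - Ccard * z i) := step3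
    _ = ∑ i ∈ Finset.range (n+1), (Bperp i - B i) * Z i := step2.symm
    _ ≤ ∑ i ∈ Finset.range (n+1), (Bperp i - B i) * h i := step1
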